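/- Let G be a finite simple graph in which every vertex has degree at most 3, and let 𝒫' be a finite set of pairwise edge-disjoint paths in G, each containing at least one edge. Then there exists a subset 𝒫 ⊆ 𝒫' of pairwise vertex-disjoint paths with |𝒫| ≥ |𝒫'|/9. -/

import Mathlib

open Finset

section Aux

set_option linter.unusedSectionVars false

variable {V : Type*} [DecidableEq V] {G : SimpleGraph V}

/-- A non-nil walk has an edge containing its first vertex. -/
lemma first_edge {u w : V} (q : G.Walk u w) (h : ¬ q.Nil) : ∃ e ∈ q.edges, u ∈ e := by
  cases q with
  | nil => simp at h
  | cons h' q => exact ⟨s(u, _), by rw [SimpleGraph.Walk.edges_cons]; exact List.mem_cons_self, by simp⟩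

lemma last_edge {u w : V} (q : G.Walk u w) (h : ¬ q.Nil) : ∃ e ∈ q.edges, w ∈ e := by
  obtain ⟨e, he, hwe⟩ := first_edge q.reverse (by simp only [SimpleGraph.Walk.nil_iff_length_eq, SimpleGraph.Walk.length_reverse] at h ⊢; omega)
  exact ⟨e, by simpa [SimpleGraph.Walk.edges_reverse] using he, hwe⟩

/-- A vertex on a non-nil walk has an incident edge of the walk. -/
lemma exists_incident_edge {u w : V} (q : G.Walk u w) (hq : ¬ q.Nil) {v : V}
    (hv : v ∈ q.support) : ∃ e ∈ q.edges, v ∈ e := by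
  by_cases hvu : v = u
  · subst hvu; exact first_edge q hq
  · obtain ⟨e, he, hve⟩ := last_edge (q.takeUntil v hv)
      (SimpleGraph.Walk.not_nil_of_ne (fun h => hvu h.symm))
    exact ⟨e, q.edges_takeUntil_subset hv he, hve⟩

/-- A vertex internal to a trail has two distinct incident edges of the trail. -/
lemma exists_two_incident_edges {u w : V} (q : G.Walk u w) (hq : q.IsTrail) {v : V}
    (hv : v ∈ q.support) (hu : v ≠ u) (hw : v ≠ w) :
    ∃ e₁ ∈ q.edges, ∃ e₂ ∈ q.edges, e₁ ≠ e₂ ∧ v ∈ e₁ ∧ v ∈ e₂ := by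
  obtain ⟨e₁, he₁, hve₁⟩ := last_edge (q.takeUntil v hv)
    (SimpleGraph.Walk.not_nil_of_ne (fun h => hu h.symm))
  obtain ⟨e₂, he₂, hve₂⟩ := first_edge (q.dropUntil v hv)
    (SimpleGraph.Walk.not_nil_of_ne hw)
  have hsplit : q.edges = (q.takeUntil v hv).edges ++ (q.dropUntil v hv).edges := by
    conv_lhs => rw [← q.take_spec hv]
    rw [SimpleGraph.Walk.edges_append]
  have hnd := hq.edges_nodup
  rw [hsplit, List.nodup_append] at hnd
  refine ⟨e₁, ?_, e₂, ?_, ?_, hve₁, hve₂⟩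
  · rw [hsplit]; exact List.mem_append_left _ he₁
  · rw [hsplit]; exact List.mem_append_right _ he₂
  · intro h; exact hnd.2.2 e₁ he₁ e₂ he₂ h

end Aux


/-- Greedy independent-set lemma: if each conflict is "charged" to one of its endpoints
and each element is charged at most 4 conflicts, then any finset `T` contains an
independent subset of size at least `|T|/9`. -/
lemma core_indep {ι : Type*} [DecidableEq ι] (R : ι → ι → Prop)
    (hsymm : ∀ i j, R i j → R j i)
    (f : ι → Finset ι) (hf : ∀ i, (f i).card ≤ 4)
    (hcover : ∀ i j, i ≠ j → R i j → j ∈ f i ∨ i ∈ f j) :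
    ∀ T : Finset ι, ∃ S ⊆ T, T.card ≤ 9 * S.card ∧
      ∀ i ∈ S, ∀ j ∈ S, i ≠ j → ¬ R i j := by
  classical
  intro T
  induction T using Finset.strongInduction with
  | _ T ih =>
    rcases T.eq_empty_or_nonempty with rfl | hT
    · exact ⟨∅, Subset.rfl, by simp, by simp⟩
    · -- degree function within T
      set d : ι → ℕ := fun i => (T.filter (fun j => j ≠ i ∧ R i j)).card with hd
      have hsum : ∑ i ∈ T, d i ≤ ∑ i ∈ T, 8 := by
        have h1 : ∀ i, d i ≤ 4 + (T.filter (fun j => i ∈ f j)).card := by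
          intro i
          have hsub : T.filter (fun j => j ≠ i ∧ R i j) ⊆
              f i ∪ T.filter (fun j => i ∈ f j) := by
            intro j hj
            simp only [mem_filter] at hj
            rcases hcover i j (fun h => hj.2.1 h.symm) hj.2.2 with h | h
            · exact mem_union_left _ h
            · exact mem_union_right _ (mem_filter.2 ⟨hj.1, h⟩)
          calc d i ≤ (f i ∪ T.filter (fun j => i ∈ f j)).card := card_le_card hsub
            _ ≤ (f i).card + (T.filter (fun j => i ∈ f j)).card := card_union_le _ _
            _ ≤ 4 + (T.filter (fun j => i ∈ f j)).card := by
                have := hf i; omega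
        have h2 : ∑ i ∈ T, (T.filter (fun j => i ∈ f j)).card ≤ ∑ _i ∈ T, 4 := by
          have hswap : ∑ i ∈ T, (T.filter (fun j => i ∈ f j)).card
              = ∑ j ∈ T, (T.filter (fun i => i ∈ f j)).card := by
            simp only [card_filter]
            rw [Finset.sum_comm]
          rw [hswap]
          refine sum_le_sum fun j _ => ?_
          calc (T.filter (fun i => i ∈ f j)).card ≤ (f j).card :=
                card_le_card (by intro x hx; exact (mem_filter.1 hx).2)
            _ ≤ 4 := hf j
        calc ∑ i ∈ T, d i ≤ ∑ i ∈ T, (4 + (T.filter (fun j => i ∈ f j)).card) :=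
              sum_le_sum fun i _ => h1 i
          _ = ∑ _i ∈ T, 4 + ∑ i ∈ T, (T.filter (fun j => i ∈ f j)).card := by
              rw [sum_add_distrib]
          _ ≤ ∑ _i ∈ T, 4 + ∑ _i ∈ T, 4 := by omega
          _ = ∑ _i ∈ T, 8 := by rw [← Finset.sum_add_distrib]
      obtain ⟨i₀, hi₀T, hi₀⟩ := Finset.exists_le_of_sum_le hT hsum
      set N : Finset ι := T.filter (fun j => j ≠ i₀ ∧ R i₀ j) with hN
      set T' : Finset ι := T \ insert i₀ N with hT'
      have hT'ss : T' ⊂ T := by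
        refine Finset.sdiff_ssubset (fun x hx => ?_) ⟨i₀, mem_insert_self _ _⟩
        rcases mem_insert.1 hx with rfl | hx
        · exact hi₀T
        · exact (mem_filter.1 hx).1
      obtain ⟨S', hS'ss, hS'card, hS'ind⟩ := ih T' hT'ss
      have hi₀S' : i₀ ∉ S' := fun h => by
        have h2 := hS'ss h
        rw [hT', mem_sdiff] at h2
        exact h2.2 (mem_insert_self _ _)
      refine ⟨insert i₀ S', ?_, ?_, ?_⟩
      · intro x hx; rcases mem_insert.1 hx with rfl | hx
        · exact hi₀T
        · exact (mem_sdiff.1 (hS'ss hx)).1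
      · have hc0 : T.card ≤ T'.card + (insert i₀ N).card := by
          rw [hT']; exact Finset.card_le_card_sdiff_add_card
        have hNle : N.card ≤ 8 := hi₀
        have hins : (insert i₀ N).card ≤ N.card + 1 := card_insert_le i₀ N
        have : (insert i₀ S').card = S'.card + 1 := card_insert_of_notMem hi₀S'
        omega
      · have hnot : ∀ j ∈ S', j ≠ i₀ → ¬ R i₀ j := by
          intro j hj hne hR
          have hjT' := hS'ss hj
          rw [hT', mem_sdiff] at hjT'
          exact hjT'.2 (mem_insert.2 (Or.inr (mem_filter.2 ⟨hjT'.1, hne, hR⟩)))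
        intro i hi j hj hij hR
        rcases mem_insert.1 hi with hi' | hi' <;> rcases mem_insert.1 hj with hj' | hj'
        · exact hij (hi'.trans hj'.symm)
        · exact hnot j hj' (fun h => hij (hi'.trans h.symm)) (hi' ▸ hR)
        · exact hnot i hi' (fun h => hij (h.trans hj'.symm)) (hj' ▸ hsymm _ _ hR)
        · exact hS'ind i hi' j hj' hij hR

/-- Let `G` be a finite simple graph of maximum degree at most `3`, and let
`𝒫'` be a finite collection (indexed by a finite type `ι`) of pairwise edge-disjoint paths
in `G`, each containing at least one edge. Then there is a subcollection of pairwise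
vertex-disjoint paths of size at least `|𝒫'|/9`. -/
theorem stmt_9 {V : Type*} [Fintype V] [DecidableEq V] (G : SimpleGraph V)
    [DecidableRel G.Adj] (hdeg : ∀ v, G.degree v ≤ 3)
    {ι : Type*} [Fintype ι] (a b : ι → V) (p : ∀ i, G.Walk (a i) (b i))
    (hpath : ∀ i, (p i).IsPath) (hlen : ∀ i, 0 < (p i).length)
    (hedisj : ∀ i j, i ≠ j → ∀ e ∈ (p i).edges, e ∉ (p j).edges) :
    ∃ S : Finset ι, (Fintype.card ι : ℝ) / 9 ≤ (S.card : ℝ) ∧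
      ∀ i ∈ S, ∀ j ∈ S, i ≠ j → ∀ v ∈ (p i).support, v ∉ (p j).support := by
  classical
  have hnn : ∀ i, ¬ (p i).Nil := fun i =>
    SimpleGraph.Walk.not_nil_iff_lt_length.2 (hlen i)
  -- every vertex lies on at most 3 of the paths
  have atMostThree : ∀ v : V,
      (univ.filter fun i => v ∈ (p i).support).card ≤ 3 := by
    intro v
    have hch : ∀ i : ι, ∃ e : Sym2 V,
        v ∈ (p i).support → e ∈ (p i).edges ∧ v ∈ e := by
      intro i
      by_cases h : v ∈ (p i).support
      · obtain ⟨e, he, hve⟩ := exists_incident_edge (p i) (hnn i) h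
        exact ⟨e, fun _ => ⟨he, hve⟩⟩
      · exact ⟨s(v, v), fun h' => absurd h' h⟩
    choose g hg using hch
    have hle : (univ.filter fun i => v ∈ (p i).support).card ≤
        (G.incidenceFinset v).card := by
      apply card_le_card_of_injOn g
      · intro i hi
        have hvi : v ∈ (p i).support := (mem_filter.1 hi).2
        rw [mem_coe, SimpleGraph.mem_incidenceFinset]
        exact ⟨(p i).edges_subset_edgeSet (hg i hvi).1, (hg i hvi).2⟩
      · intro i hi j hj hgij
        by_contra hne
        have hvi : v ∈ (p i).support := (mem_filter.1 (mem_coe.1 hi)).2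
        have hvj : v ∈ (p j).support := (mem_filter.1 (mem_coe.1 hj)).2
        exact hedisj i j hne (g i) (hg i hvi).1 (hgij ▸ (hg j hvj).1)
    rw [SimpleGraph.card_incidenceFinset_eq_degree] at hle
    exact hle.trans (hdeg v)
  have key : ∀ (v : V) (i : ι), v ∈ (p i).support →
      (univ.filter fun j => j ≠ i ∧ v ∈ (p j).support).card ≤ 2 := by
    intro v i hv
    have h3 := atMostThree v
    have heq : (univ.filter fun j => j ≠ i ∧ v ∈ (p j).support)
        = (univ.filter fun j => v ∈ (p j).support).erase i := by
      ext j
      simp only [mem_filter, mem_erase, mem_univ, true_and]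
    rw [heq, card_erase_of_mem (a := i)
      (s := univ.filter fun j => v ∈ (p j).support) (mem_filter.2 ⟨mem_univ _, hv⟩)]
    omega
  -- conflict relation and charging function
  set R : ι → ι → Prop := fun i j => ∃ v, v ∈ (p i).support ∧ v ∈ (p j).support
    with hR
  set f : ι → Finset ι := fun i =>
    univ.filter fun j => j ≠ i ∧ (a i ∈ (p j).support ∨ b i ∈ (p j).support)
    with hfdef
  have hf : ∀ i, (f i).card ≤ 4 := by
    intro i
    have hsub : f i ⊆ (univ.filter fun j => j ≠ i ∧ a i ∈ (p j).support) ∪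
        (univ.filter fun j => j ≠ i ∧ b i ∈ (p j).support) := by
      intro j hj
      simp only [hfdef, mem_filter, mem_union, mem_univ, true_and] at hj ⊢
      tauto
    calc (f i).card ≤ _ := card_le_card hsub
      _ ≤ (univ.filter fun j => j ≠ i ∧ a i ∈ (p j).support).card +
          (univ.filter fun j => j ≠ i ∧ b i ∈ (p j).support).card := card_union_le _ _
      _ ≤ 4 := by
          have h1 := key (a i) i (p i).start_mem_support
          have h2 := key (b i) i (p i).end_mem_support
          omega
  have hcover : ∀ i j, i ≠ j → R i j → j ∈ f i ∨ i ∈ f j := by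
    intro i j hij ⟨v, hvi, hvj⟩
    by_cases hai : v = a i
    · exact Or.inl (mem_filter.2 ⟨mem_univ _, fun h => hij h.symm, Or.inl (hai ▸ hvj)⟩)
    by_cases hbi : v = b i
    · exact Or.inl (mem_filter.2 ⟨mem_univ _, fun h => hij h.symm, Or.inr (hbi ▸ hvj)⟩)
    by_cases haj : v = a j
    · exact Or.inr (mem_filter.2 ⟨mem_univ _, hij, Or.inl (haj ▸ hvi)⟩)
    by_cases hbj : v = b j
    · exact Or.inr (mem_filter.2 ⟨mem_univ _, hij, Or.inr (hbj ▸ hvi)⟩)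
    -- v is internal to both paths: contradiction with degree ≤ 3
    exfalso
    obtain ⟨e₁, he₁, e₂, he₂, h12, hv1, hv2⟩ :=
      exists_two_incident_edges (p i) (hpath i).isTrail hvi hai hbi
    obtain ⟨e₃, he₃, e₄, he₄, h34, hv3, hv4⟩ :=
      exists_two_incident_edges (p j) (hpath j).isTrail hvj haj hbj
    have h13 : e₁ ≠ e₃ := fun h => hedisj i j hij e₁ he₁ (h ▸ he₃)
    have h14 : e₁ ≠ e₄ := fun h => hedisj i j hij e₁ he₁ (h ▸ he₄)
    have h23 : e₂ ≠ e₃ := fun h => hedisj i j hij e₂ he₂ (h ▸ he₃)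
    have h24 : e₂ ≠ e₄ := fun h => hedisj i j hij e₂ he₂ (h ▸ he₄)
    have hsub : ({e₁, e₂, e₃, e₄} : Finset (Sym2 V)) ⊆ G.incidenceFinset v := by
      intro e he
      simp only [mem_insert, mem_singleton] at he
      rw [SimpleGraph.mem_incidenceFinset]
      rcases he with rfl | rfl | rfl | rfl
      · exact ⟨(p i).edges_subset_edgeSet he₁, hv1⟩
      · exact ⟨(p i).edges_subset_edgeSet he₂, hv2⟩
      · exact ⟨(p j).edges_subset_edgeSet he₃, hv3⟩
      · exact ⟨(p j).edges_subset_edgeSet he₄, hv4⟩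
    have hcard : ({e₁, e₂, e₃, e₄} : Finset (Sym2 V)).card = 4 := by
      rw [card_insert_of_notMem (by simp [h12, h13, h14]),
        card_insert_of_notMem (by simp [h23, h24]),
        card_insert_of_notMem (by simp [h34]), card_singleton]
    have hle := card_le_card hsub
    rw [hcard, SimpleGraph.card_incidenceFinset_eq_degree] at hle
    have := hdeg v
    omega
  obtain ⟨S, _, hScard, hSind⟩ := core_indep R
    (fun i j ⟨v, h1, h2⟩ => ⟨v, h2, h1⟩) f hf hcover univ
  rw [card_univ] at hScard
  refine ⟨S, ?_, ?_⟩
  · rw [div_le_iff₀ (by norm_num : (0:ℝ) < 9)]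
    have h9 : (Fintype.card ι : ℝ) ≤ 9 * S.card := by exact_mod_cast hScard
    linarith
  · intro i hi j hj hij v hvi hvj
    exact hSind i hi j hj hij ⟨v, hvi, hvj⟩
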